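/- For every p ∈ [1,∞) there exists a constant c_p > 0 such that for all finite connected nonempty graphs A and B, the L^p-Poincaré constant of the product graph A × B satisfies h^p(A × B) ≥ c_p · min(h^p(A), h^p(B)). -/

import Mathlib

/-- The max-gradient of `f` at `x`: `sup` of `|f x - f y|` over neighbours `y`. -/
noncomputable def grad {V : Type*} (Adj : V → V → Prop) (f : V → ℝ) (x : V) : ℝ :=
  ⨆ y, ⨆ (_ : Adj x y), |f x - f y|

/-- The `Lᵖ` norm of `g : V → ℝ` (counting measure). -/
noncomputable def pnorm {V : Type*} [Fintype V] (p : ℝ) (g : V → ℝ) : ℝ :=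
  (∑ x, |g x| ^ p) ^ (1 / p)

/-- The `Lᵖ`-Poincaré constant of a finite graph: the infimum of
`‖∇f‖_p / ‖f - f_Γ‖_p` over nonconstant `f`, where `f_Γ` is the mean of `f`. -/
noncomputable def poincareConst {V : Type*} [Fintype V] (p : ℝ) (G : SimpleGraph V) : ℝ :=
  sInf { r | ∃ f : V → ℝ, (∃ x y, f x ≠ f y) ∧
    r = pnorm p (grad G.Adj f) / pnorm p (fun x => f x - (∑ w, f w) / (Fintype.card V : ℝ)) }

section Aux

open Finset

variable {V : Type*}

lemma grad_nonneg (Adj : V → V → Prop) (f : V → ℝ) (x : V) : 0 ≤ grad Adj f x :=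
  Real.iSup_nonneg fun _ => Real.iSup_nonneg fun _ => abs_nonneg _

lemma grad_le {Adj : V → V → Prop} {f : V → ℝ} {x : V} {K : ℝ} (hK : 0 ≤ K)
    (h : ∀ y, Adj x y → |f x - f y| ≤ K) : grad Adj f x ≤ K :=
  Real.iSup_le (fun y => Real.iSup_le (fun hy => h y hy) hK) hK

lemma le_grad [Fintype V] {Adj : V → V → Prop} {f : V → ℝ} {x y : V} (h : Adj x y) :
    |f x - f y| ≤ grad Adj f x := by
  have h2 : |f x - f y| ≤ ⨆ (_ : Adj x y), |f x - f y| :=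
    le_ciSup (f := fun _ : Adj x y => |f x - f y|)
      ⟨|f x - f y|, by rintro z ⟨_, rfl⟩; exact le_rfl⟩ h
  exact h2.trans (le_ciSup (f := fun y => ⨆ (_ : Adj x y), |f x - f y|)
    (Set.Finite.bddAbove (Set.finite_range _)) y)

variable [Fintype V]

lemma pnorm_nonneg (p : ℝ) (g : V → ℝ) : 0 ≤ pnorm p g :=
  Real.rpow_nonneg (Finset.sum_nonneg fun x _ => Real.rpow_nonneg (abs_nonneg _) _) _

lemma pnorm_rpow {p : ℝ} (hp : 0 < p) (g : V → ℝ) : (pnorm p g) ^ p = ∑ x, |g x| ^ p := by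
  have hS : (0:ℝ) ≤ ∑ x, |g x| ^ p :=
    Finset.sum_nonneg fun x _ => Real.rpow_nonneg (abs_nonneg _) _
  rw [pnorm, ← Real.rpow_mul hS, one_div_mul_cancel hp.ne', Real.rpow_one]

lemma pnorm_pos {p : ℝ} (hp : 0 < p) {g : V → ℝ} (x : V) (hx : g x ≠ 0) :
    0 < pnorm p g := by
  apply Real.rpow_pos_of_pos
  exact Finset.sum_pos' (fun y _ => Real.rpow_nonneg (abs_nonneg _) _)
    ⟨x, Finset.mem_univ x, Real.rpow_pos_of_pos (abs_pos.2 hx) p⟩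

lemma mul_pnorm_le_of_pow {p : ℝ} (hp : 0 < p) {m : ℝ} (hm : 0 ≤ m) {g h : V → ℝ}
    (H : m ^ p * ∑ x, |g x| ^ p ≤ ∑ x, |h x| ^ p) : m * pnorm p g ≤ pnorm p h := by
  have h1 : (0:ℝ) ≤ m * pnorm p g := mul_nonneg hm (pnorm_nonneg p g)
  have key : (m * pnorm p g) ^ p ≤ (pnorm p h) ^ p := by
    rw [Real.mul_rpow hm (pnorm_nonneg p g), pnorm_rpow hp, pnorm_rpow hp]
    exact H
  calc m * pnorm p g = ((m * pnorm p g) ^ p) ^ (1/p) := by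
        rw [← Real.rpow_mul h1, mul_one_div, div_self hp.ne', Real.rpow_one]
    _ ≤ ((pnorm p h) ^ p) ^ (1/p) :=
        Real.rpow_le_rpow (Real.rpow_nonneg h1 _) key (by positivity)
    _ = pnorm p h := by
        rw [← Real.rpow_mul (pnorm_nonneg p h), mul_one_div, div_self hp.ne', Real.rpow_one]

lemma poincareConst_nonneg (p : ℝ) (G : SimpleGraph V) : 0 ≤ poincareConst p G := by
  apply Real.sInf_nonneg
  rintro r ⟨f, -, rfl⟩
  exact div_nonneg (pnorm_nonneg _ _) (pnorm_nonneg _ _)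

lemma poincare_apply [Nonempty V] {p : ℝ} (hp : 0 < p) (G : SimpleGraph V) (g : V → ℝ) :
    poincareConst p G * pnorm p (fun x => g x - (∑ w, g w) / (Fintype.card V : ℝ))
      ≤ pnorm p (grad G.Adj g) := by
  by_cases hg : ∃ x y, g x ≠ g y
  · obtain ⟨x, y, hxy⟩ := hg
    set d : V → ℝ := fun x => g x - (∑ w, g w) / (Fintype.card V : ℝ) with hd
    have hdxy : d x ≠ 0 ∨ d y ≠ 0 := by
      by_contra hc
      push_neg at hc
      apply hxy
      have h1 : d x = 0 := hc.1
      have h2 : d y = 0 := hc.2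
      simp only [hd] at h1 h2
      linarith [sub_eq_zero.mp h1, sub_eq_zero.mp h2]
    have hdpos : 0 < pnorm p d := by
      rcases hdxy with h | h
      · exact pnorm_pos hp x h
      · exact pnorm_pos hp y h
    have hbdd : BddBelow { r | ∃ f : V → ℝ, (∃ x y, f x ≠ f y) ∧
        r = pnorm p (grad G.Adj f) /
          pnorm p (fun x => f x - (∑ w, f w) / (Fintype.card V : ℝ)) } := by
      refine ⟨0, ?_⟩
      rintro r ⟨f, -, rfl⟩
      exact div_nonneg (pnorm_nonneg _ _) (pnorm_nonneg _ _)
    have hle : poincareConst p G ≤ pnorm p (grad G.Adj g) / pnorm p d :=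
      csInf_le hbdd ⟨g, ⟨x, y, hxy⟩, rfl⟩
    calc poincareConst p G * pnorm p d
        ≤ (pnorm p (grad G.Adj g) / pnorm p d) * pnorm p d :=
          mul_le_mul_of_nonneg_right hle hdpos.le
      _ = pnorm p (grad G.Adj g) := div_mul_cancel₀ _ hdpos.ne'
  · push_neg at hg
    have hz : (fun x => g x - (∑ w, g w) / (Fintype.card V : ℝ)) = fun _ => (0:ℝ) := by
      funext x
      have hs : ∑ w, g w = (Fintype.card V : ℝ) * g x := by
        rw [Finset.sum_congr rfl fun w _ => hg w x, Finset.sum_const, Finset.card_univ,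
          nsmul_eq_mul]
      have hc : (0:ℝ) < (Fintype.card V : ℝ) := by
        exact_mod_cast Fintype.card_pos
      rw [hs]; field_simp; simp
    rw [hz]
    have : pnorm p (fun _ : V => (0:ℝ)) = 0 := by
      simp [pnorm, Real.zero_rpow hp.ne', Real.zero_rpow (one_div_ne_zero hp.ne'), Real.zero_rpow (inv_ne_zero hp.ne')]
    rw [this, mul_zero]
    exact pnorm_nonneg _ _

end Aux

set_option maxHeartbeats 2000000 in
/-- For every `p ∈ [1,∞)` there is a constant `c_p > 0` such that for all finite
connected nonempty graphs `A`, `B`: `h^p(A × B) ≥ c_p · min (h^p A) (h^p B)`,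
where `A × B` is the Cartesian (box) product graph. -/
theorem stmt5 (p : ℝ) (hp : 1 ≤ p) :
    ∃ c : ℝ, 0 < c ∧
      ∀ (VA VB : Type) [Fintype VA] [Fintype VB] [Nonempty VA] [Nonempty VB]
        (A : SimpleGraph VA) (B : SimpleGraph VB),
        A.Connected → B.Connected →
        c * min (poincareConst p A) (poincareConst p B)
          ≤ poincareConst p (A.boxProd B) := by
  classical
  have hp0 : (0:ℝ) < p := lt_of_lt_of_le one_pos hp
  refine ⟨1/2, by norm_num, ?_⟩
  intro VA VB _ _ _ _ A B _ _
  set m : ℝ := min (poincareConst p A) (poincareConst p B) with hmdef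
  have hm0 : 0 ≤ m := le_min (poincareConst_nonneg p A) (poincareConst_nonneg p B)
  have hcB : (0:ℝ) < (Fintype.card VB : ℝ) := by exact_mod_cast Fintype.card_pos
  have hcA : (0:ℝ) < (Fintype.card VA : ℝ) := by exact_mod_cast Fintype.card_pos
  by_cases htriv : ∃ f : VA × VB → ℝ, ∃ x y, f x ≠ f y
  · -- main case
    obtain ⟨f₀, x₀, y₀, hxy₀⟩ := htriv
    rw [poincareConst]
    refine le_csInf ⟨_, f₀, ⟨x₀, y₀, hxy₀⟩, rfl⟩ ?_
    rintro r ⟨f, ⟨x₁, y₁, hxy⟩, rfl⟩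
    -- notation
    set G : VA × VB → ℝ := grad (A.boxProd B).Adj f with hG
    have hGnn : ∀ x, 0 ≤ G x := fun x => grad_nonneg _ _ _
    set μ : ℝ := (∑ w, f w) / (Fintype.card (VA × VB) : ℝ) with hμ
    set M : VA → ℝ := fun a => (∑ b, f (a, b)) / (Fintype.card VB : ℝ) with hM
    -- Step 1 : fiberwise Poincaré in the B direction
    have step1 : m * pnorm p (fun x => f x - M x.1) ≤ pnorm p G := by
      apply mul_pnorm_le_of_pow hp0 hm0
      have hfiber : ∀ a : VA,
          (poincareConst p B) ^ p * ∑ b, |f (a, b) - M a| ^ p ≤ ∑ b, |G (a, b)| ^ p := by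
        intro a
        have h1 := poincare_apply hp0 B (fun b => f (a, b))
        have h2 : (poincareConst p B * pnorm p (fun b => f (a, b) - M a)) ^ p
            ≤ (pnorm p (grad B.Adj (fun b => f (a, b)))) ^ p :=
          Real.rpow_le_rpow (mul_nonneg (poincareConst_nonneg p B) (pnorm_nonneg _ _)) h1 hp0.le
        rw [Real.mul_rpow (poincareConst_nonneg p B) (pnorm_nonneg _ _),
          pnorm_rpow hp0, pnorm_rpow hp0] at h2
        refine h2.trans (Finset.sum_le_sum fun b _ => ?_)
        have hb1 : grad B.Adj (fun b => f (a, b)) b ≤ G (a, b) := by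
          apply grad_le (hGnn _)
          intro b' hb'
          exact le_grad (by rw [SimpleGraph.boxProd_adj]; exact Or.inr ⟨hb', rfl⟩)
        rw [abs_of_nonneg (grad_nonneg _ _ _), abs_of_nonneg (hGnn _)]
        exact Real.rpow_le_rpow (grad_nonneg _ _ _) hb1 hp0.le
      have hmB : m ^ p ≤ (poincareConst p B) ^ p :=
        Real.rpow_le_rpow hm0 (min_le_right _ _) hp0.le
      calc m ^ p * ∑ x : VA × VB, |f x - M x.1| ^ p
          ≤ (poincareConst p B) ^ p * ∑ x : VA × VB, |f x - M x.1| ^ p := by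
            apply mul_le_mul_of_nonneg_right hmB
            exact Finset.sum_nonneg fun x _ => Real.rpow_nonneg (abs_nonneg _) _
        _ = ∑ a, (poincareConst p B) ^ p * ∑ b, |f (a, b) - M a| ^ p := by
            rw [Fintype.sum_prod_type, Finset.mul_sum]
        _ ≤ ∑ a, ∑ b, |G (a, b)| ^ p := Finset.sum_le_sum fun a _ => hfiber a
        _ = ∑ x : VA × VB, |G x| ^ p := (Fintype.sum_prod_type (f := fun x : VA × VB => |G x| ^ p)).symm
    -- mean of M over A equals μ
    have hμM : (∑ a, M a) / (Fintype.card VA : ℝ) = μ := by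
      have h1 : ∑ a, M a = (∑ w : VA × VB, f w) / (Fintype.card VB : ℝ) := by
        rw [hM, ← Finset.sum_div, Fintype.sum_prod_type]
      rw [h1, hμ, Fintype.card_prod]
      push_cast
      rw [div_div, mul_comm]
    -- Step 2 : Poincaré in the A direction applied to M
    have step2 : m * pnorm p (fun x : VA × VB => M x.1 - μ) ≤ pnorm p G := by
      apply mul_pnorm_le_of_pow hp0 hm0
      have h1 := poincare_apply hp0 A M
      rw [hμM] at h1
      have h2 : (poincareConst p A * pnorm p (fun a => M a - μ)) ^ p
          ≤ (pnorm p (grad A.Adj M)) ^ p :=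
        Real.rpow_le_rpow (mul_nonneg (poincareConst_nonneg p A) (pnorm_nonneg _ _)) h1 hp0.le
      rw [Real.mul_rpow (poincareConst_nonneg p A) (pnorm_nonneg _ _),
        pnorm_rpow hp0, pnorm_rpow hp0] at h2
      -- bound the gradient of M by the mean of G over the fiber
      have hgradM : ∀ a, grad A.Adj M a ≤ (∑ b, G (a, b)) / (Fintype.card VB : ℝ) := by
        intro a
        apply grad_le (div_nonneg (Finset.sum_nonneg fun b _ => hGnn _) hcB.le)
        intro a' ha'
        have : M a - M a' = (∑ b, (f (a, b) - f (a', b))) / (Fintype.card VB : ℝ) := by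
          rw [hM, Finset.sum_sub_distrib, sub_div]
        rw [this, abs_div, abs_of_pos hcB]
        gcongr
        refine (Finset.abs_sum_le_sum_abs _ _).trans (Finset.sum_le_sum fun b _ => ?_)
        exact le_grad (by rw [SimpleGraph.boxProd_adj]; exact Or.inl ⟨ha', rfl⟩)
      -- Jensen: p-th power of a mean is at most the mean of the p-th powers
      have hJensen : ∀ a, ((∑ b, G (a, b)) / (Fintype.card VB : ℝ)) ^ p
          ≤ (∑ b, |G (a, b)| ^ p) / (Fintype.card VB : ℝ) := by
        intro a
        have := Real.rpow_arith_mean_le_arith_mean_rpow Finset.univ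
          (fun _ : VB => ((Fintype.card VB : ℝ))⁻¹) (fun b => G (a, b))
          (fun _ _ => by positivity)
          (by
            rw [Finset.sum_const, Finset.card_univ, nsmul_eq_mul]
            exact mul_inv_cancel₀ hcB.ne')
          (fun b _ => hGnn _) hp
        calc ((∑ b, G (a, b)) / (Fintype.card VB : ℝ)) ^ p
            = (∑ b, ((Fintype.card VB : ℝ))⁻¹ * G (a, b)) ^ p := by
              rw [← Finset.mul_sum, div_eq_inv_mul]
          _ ≤ ∑ b, ((Fintype.card VB : ℝ))⁻¹ * G (a, b) ^ p := this
          _ = (∑ b, |G (a, b)| ^ p) / (Fintype.card VB : ℝ) := by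
              rw [← Finset.mul_sum, ← div_eq_inv_mul]
              congr 1
              exact Finset.sum_congr rfl fun b _ => by rw [abs_of_nonneg (hGnn _)]
      have hsum : ∑ a, |grad A.Adj M a| ^ p
          ≤ (∑ x : VA × VB, |G x| ^ p) / (Fintype.card VB : ℝ) := by
        rw [Fintype.sum_prod_type, Finset.sum_div]
        refine Finset.sum_le_sum fun a _ => ?_
        rw [abs_of_nonneg (grad_nonneg _ _ _)]
        exact (Real.rpow_le_rpow (grad_nonneg _ _ _) (hgradM a)
          hp0.le).trans (hJensen a)
      have hmA : m ^ p ≤ (poincareConst p A) ^ p :=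
        Real.rpow_le_rpow hm0 (min_le_left _ _) hp0.le
      have hfinal : (poincareConst p A) ^ p * ∑ a, |M a - μ| ^ p
          ≤ (∑ x : VA × VB, |G x| ^ p) / (Fintype.card VB : ℝ) := h2.trans hsum
      have hexp : ∑ x : VA × VB, |M x.1 - μ| ^ p
          = (Fintype.card VB : ℝ) * ∑ a, |M a - μ| ^ p := by
        rw [Fintype.sum_prod_type, Finset.mul_sum]
        refine Finset.sum_congr rfl fun a _ => ?_
        simp [Finset.sum_const, Finset.card_univ, nsmul_eq_mul]
      calc m ^ p * ∑ x : VA × VB, |M x.1 - μ| ^ p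
          = (Fintype.card VB : ℝ) * (m ^ p * ∑ a, |M a - μ| ^ p) := by
            rw [hexp]; ring
        _ ≤ (Fintype.card VB : ℝ) * ((poincareConst p A) ^ p * ∑ a, |M a - μ| ^ p) := by
            apply mul_le_mul_of_nonneg_left ?_ hcB.le
            apply mul_le_mul_of_nonneg_right hmA
            exact Finset.sum_nonneg fun a _ => Real.rpow_nonneg (abs_nonneg _) _
        _ ≤ (Fintype.card VB : ℝ) * ((∑ x : VA × VB, |G x| ^ p) / (Fintype.card VB : ℝ)) :=
            mul_le_mul_of_nonneg_left hfinal hcB.le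
        _ = ∑ x : VA × VB, |G x| ^ p := mul_div_cancel₀ _ hcB.ne'
    -- triangle inequality
    have htri : pnorm p (fun x => f x - μ)
        ≤ pnorm p (fun x => f x - M x.1) + pnorm p (fun x : VA × VB => M x.1 - μ) := by
      have := Real.Lp_add_le Finset.univ (fun x : VA × VB => f x - M x.1)
        (fun x : VA × VB => M x.1 - μ) hp
      simp only [pnorm]
      convert this using 3
      ring
    -- positivity of the denominator
    have hdpos : 0 < pnorm p (fun x => f x - μ) := by
      have : f x₁ - μ ≠ 0 ∨ f y₁ - μ ≠ 0 := by
        by_contra hc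
        push_neg at hc
        exact hxy (by linarith [sub_eq_zero.mp hc.1, sub_eq_zero.mp hc.2])
      rcases this with h | h
      · exact pnorm_pos hp0 x₁ h
      · exact pnorm_pos hp0 y₁ h
    -- conclusion
    rw [le_div_iff₀ hdpos]
    have : m * pnorm p (fun x => f x - μ) ≤ 2 * pnorm p G := by
      calc m * pnorm p (fun x => f x - μ)
          ≤ m * (pnorm p (fun x => f x - M x.1) + pnorm p (fun x : VA × VB => M x.1 - μ)) :=
            mul_le_mul_of_nonneg_left htri hm0
        _ = m * pnorm p (fun x => f x - M x.1) + m * pnorm p (fun x : VA × VB => M x.1 - μ) := by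
            ring
        _ ≤ pnorm p G + pnorm p G := add_le_add step1 step2
        _ = 2 * pnorm p G := by ring
    linarith
  · -- degenerate case : every function on the product is constant
    push_neg at htriv
    have hA0 : poincareConst p A = 0 := by
      have hempty : { r | ∃ f : VA → ℝ, (∃ x y, f x ≠ f y) ∧
          r = pnorm p (grad A.Adj f) /
            pnorm p (fun x => f x - (∑ w, f w) / (Fintype.card VA : ℝ)) } = ∅ := by
        ext r
        simp only [Set.mem_setOf_eq, Set.mem_empty_iff_false, iff_false]
        rintro ⟨f, ⟨x, y, hxy⟩, -⟩
        exact hxy (htriv (f ∘ Prod.fst) (x, Classical.arbitrary VB) (y, Classical.arbitrary VB))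
      rw [poincareConst, hempty, Real.sInf_empty]
    have h1 : m ≤ 0 := (min_le_left _ _).trans hA0.le
    have h2 := poincareConst_nonneg p (A.boxProd B)
    nlinarith
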